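/- Let M, M̃, M̄ be three mean-field MDPs on the same finite S, A, horizon H and initial distribution μ₁. For all policies π, π̃ ∈ Π: E_{π̃,M̃(π)}[Σ_{h=1}^H ‖P_{M̃,h}(·|s_h,a_h,μ^π_{M̃,h}) − P_{M̄,h}(·|s_h,a_h,μ^π_{M̄,h})‖₁] ≤ E_{π̃,M(π)}[Σ_{h=1}^H ‖P_{M,h}(·|s_h,a_h,μ^π_{M,h}) − P_{M̄,h}(·|s_h,a_h,μ^π_{M̄,h})‖₁] + (H+1) · E_{π̃,M(π)}[Σ_{h=1}^H ‖P_{M,h}(·|s_h,a_h,μ^π_{M,h}) − P_{M̃,h}(·|s_h,a_h,μ^π_{M̃,h})‖₁]. -/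

import Mathlib

/-- ℓ1 distance between two functions on a finite type. -/
def l1 {X : Type*} [Fintype X] (p q : X → ℝ) : ℝ := ∑ x, |p x - q x|

/-- A (nonstationary Markov) policy: at each step `h` (0-indexed) and state `s`,
`π h s` is a probability distribution over actions. -/
def IsPolicy {S A : Type*} [Fintype A] (π : ℕ → S → A → ℝ) : Prop :=
  ∀ h s, (∀ a, 0 ≤ π h s a) ∧ ∑ a, π h s a = 1

/-- The transition kernels of a mean-field MDP with horizon `H`:
at each step `h < H`, `P h s a μ ∈ Δ(S)` whenever `μ ∈ Δ(S)`. -/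
def IsKernel {S A : Type*} [Fintype S] (H : ℕ) (P : ℕ → S → A → (S → ℝ) → S → ℝ) : Prop :=
  ∀ h, h < H → ∀ s a (μ : S → ℝ), μ ∈ stdSimplex ℝ S → P h s a μ ∈ stdSimplex ℝ S

/-- Induced state densities: `dens P μ₁ π h = μ^π_{M,h+1}` (1-indexed step `h+1`). -/
def dens {S A : Type*} [Fintype S] [Fintype A] (P : ℕ → S → A → (S → ℝ) → S → ℝ)
    (μ₁ : S → ℝ) (π : ℕ → S → A → ℝ) : ℕ → S → ℝ
  | 0 => μ₁
  | h + 1 => fun s' => ∑ s, ∑ a, dens P μ₁ π h s * π h s a * P h s a (dens P μ₁ π h) s'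

/-- The state law of executing `π̃` while the kernels are frozen at the densities induced
by the reference policy `π` in model `M = (P, μ₁)`. -/
def densF {S A : Type*} [Fintype S] [Fintype A] (P : ℕ → S → A → (S → ℝ) → S → ℝ)
    (μ₁ : S → ℝ) (π πt : ℕ → S → A → ℝ) : ℕ → S → ℝ
  | 0 => μ₁
  | h + 1 => fun s' => ∑ s, ∑ a, densF P μ₁ π πt h s * πt h s a * P h s a (dens P μ₁ π h) s'

/-- `E_{π̃,M(π)}[Σ_{h=1}^H f_h(s_h,a_h)]`. -/
def expF {S A : Type*} [Fintype S] [Fintype A] (H : ℕ) (P : ℕ → S → A → (S → ℝ) → S → ℝ)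
    (μ₁ : S → ℝ) (π πt : ℕ → S → A → ℝ) (f : ℕ → S → A → ℝ) : ℝ :=
  ∑ h ∈ Finset.range H, ∑ s, ∑ a, densF P μ₁ π πt h s * πt h s a * f h s a

/-- The return `J_M(π̃;π)` of executing `π̃` with transitions and rewards frozen by `π`. -/
def Jret {S A : Type*} [Fintype S] [Fintype A] (H : ℕ) (P : ℕ → S → A → (S → ℝ) → S → ℝ)
    (r : ℕ → S → A → (S → ℝ) → ℝ) (μ₁ : S → ℝ) (πt π : ℕ → S → A → ℝ) : ℝ :=
  expF H P μ₁ π πt fun h s a => r h s a (dens P μ₁ π h)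

/-- One-sided conditional model distance `d^{π̃}(M,M'|π)`. -/
def dCond {S A : Type*} [Fintype S] [Fintype A] (H : ℕ)
    (P P' : ℕ → S → A → (S → ℝ) → S → ℝ) (μ₁ : S → ℝ) (π πt : ℕ → S → A → ℝ) : ℝ :=
  expF H P μ₁ π πt fun h s a => l1 (P h s a (dens P μ₁ π h)) (P' h s a (dens P' μ₁ π h))

open Finset

section Aux
variable {S A : Type*} [Fintype S] [Fintype A]

lemma l1_nonneg (p q : S → ℝ) : 0 ≤ l1 p q := sum_nonneg fun _ _ => abs_nonneg _

lemma l1_self (p : S → ℝ) : l1 p p = 0 := by simp [l1]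

lemma l1_symm (p q : S → ℝ) : l1 p q = l1 q p :=
  sum_congr rfl fun x _ => abs_sub_comm _ _

lemma l1_triangle (p q r : S → ℝ) : l1 p r ≤ l1 p q + l1 q r := by
  unfold l1
  rw [← sum_add_distrib]
  exact sum_le_sum fun x _ => abs_sub_le _ _ _

lemma l1_le_two {p q : S → ℝ} (hp : p ∈ stdSimplex ℝ S) (hq : q ∈ stdSimplex ℝ S) :
    l1 p q ≤ 2 := by
  unfold l1
  calc ∑ x, |p x - q x| ≤ ∑ x, (p x + q x) := by
        apply sum_le_sum; intro x _
        rw [abs_sub_le_iff]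
        constructor <;> nlinarith [hp.1 x, hq.1 x]
    _ = 2 := by rw [sum_add_distrib, hp.2, hq.2]; norm_num

lemma step_mem (ν : S → ℝ) (hν : ν ∈ stdSimplex ℝ S) (ρ : S → A → ℝ)
    (hρ : ∀ s, (∀ a, 0 ≤ ρ s a) ∧ ∑ a, ρ s a = 1)
    (K : S → A → S → ℝ) (hK : ∀ s a, K s a ∈ stdSimplex ℝ S) :
    (fun s' => ∑ s, ∑ a, ν s * ρ s a * K s a s') ∈ stdSimplex ℝ S := by
  refine ⟨fun s' => ?_, ?_⟩
  · exact sum_nonneg fun s _ => sum_nonneg fun a _ =>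
      mul_nonneg (mul_nonneg (hν.1 s) ((hρ s).1 a)) ((hK s a).1 s')
  · calc ∑ s', ∑ s, ∑ a, ν s * ρ s a * K s a s'
        = ∑ s, ∑ s', ∑ a, ν s * ρ s a * K s a s' := sum_comm
      _ = ∑ s, ∑ a, ∑ s', ν s * ρ s a * K s a s' := sum_congr rfl fun s _ => sum_comm
      _ = ∑ s, ∑ a, ν s * ρ s a := by
          refine sum_congr rfl fun s _ => sum_congr rfl fun a _ => ?_
          rw [← mul_sum, (hK s a).2, mul_one]
      _ = ∑ s, ν s := by
          refine sum_congr rfl fun s _ => ?_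
          rw [← mul_sum, (hρ s).2, mul_one]
      _ = 1 := hν.2

lemma dens_mem (H : ℕ) (Q : ℕ → S → A → (S → ℝ) → S → ℝ) (μ₁ : S → ℝ)
    (hμ₁ : μ₁ ∈ stdSimplex ℝ S) (hQ : IsKernel H Q) (π : ℕ → S → A → ℝ)
    (hπ : IsPolicy π) : ∀ h, h ≤ H → dens Q μ₁ π h ∈ stdSimplex ℝ S := by
  intro h
  induction h with
  | zero => exact fun _ => hμ₁
  | succ h ih =>
    intro hle
    have hh : h < H := Nat.lt_of_lt_of_le (Nat.lt_succ_self h) hle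
    exact step_mem _ (ih hh.le) _ (fun s => hπ h s) _
      (fun s a => hQ h hh s a _ (ih hh.le))

lemma densF_mem (H : ℕ) (Q : ℕ → S → A → (S → ℝ) → S → ℝ) (μ₁ : S → ℝ)
    (hμ₁ : μ₁ ∈ stdSimplex ℝ S) (hQ : IsKernel H Q) (π πt : ℕ → S → A → ℝ)
    (hπ : IsPolicy π) (hπt : IsPolicy πt) :
    ∀ h, h ≤ H → densF Q μ₁ π πt h ∈ stdSimplex ℝ S := by
  intro h
  induction h with
  | zero => exact fun _ => hμ₁
  | succ h ih =>
    intro hle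
    have hh : h < H := Nat.lt_of_lt_of_le (Nat.lt_succ_self h) hle
    exact step_mem _ (ih hh.le) _ (fun s => hπt h s) _
      (fun s a => hQ h hh s a _ (dens_mem H Q μ₁ hμ₁ hQ π hπ h hh.le))

lemma step_l1 (ν ν' : S → ℝ) (hν' : ∀ s, 0 ≤ ν' s) (ρ : S → A → ℝ)
    (hρ : ∀ s a, 0 ≤ ρ s a) (hρ1 : ∀ s, ∑ a, ρ s a = 1)
    (K K' : S → A → S → ℝ) (hK : ∀ s a, K s a ∈ stdSimplex ℝ S) :
    l1 (fun s' => ∑ s, ∑ a, ν s * ρ s a * K s a s')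
       (fun s' => ∑ s, ∑ a, ν' s * ρ s a * K' s a s')
    ≤ l1 ν ν' + ∑ s, ∑ a, ν' s * ρ s a * l1 (K s a) (K' s a) := by
  have key : ∀ s', |∑ s, ∑ a, ν s * ρ s a * K s a s' - ∑ s, ∑ a, ν' s * ρ s a * K' s a s'|
      ≤ ∑ s, ∑ a, (|ν s - ν' s| * ρ s a * K s a s'
          + ν' s * ρ s a * |K s a s' - K' s a s'|) := by
    intro s'
    have e : (∑ s, ∑ a, ν s * ρ s a * K s a s') - ∑ s, ∑ a, ν' s * ρ s a * K' s a s'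
        = ∑ s, ∑ a, (ν s * ρ s a * K s a s' - ν' s * ρ s a * K' s a s') := by
      rw [← sum_sub_distrib]
      exact sum_congr rfl fun s _ => (sum_sub_distrib _ _).symm
    rw [e]
    calc |∑ s, ∑ a, (ν s * ρ s a * K s a s' - ν' s * ρ s a * K' s a s')|
        ≤ ∑ s, |∑ a, (ν s * ρ s a * K s a s' - ν' s * ρ s a * K' s a s')| :=
          abs_sum_le_sum_abs _ _
      _ ≤ ∑ s, ∑ a, |ν s * ρ s a * K s a s' - ν' s * ρ s a * K' s a s'| :=
          sum_le_sum fun s _ => abs_sum_le_sum_abs _ _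
      _ ≤ _ := by
          apply sum_le_sum; intro s _; apply sum_le_sum; intro a _
          have h1 : ν s * ρ s a * K s a s' - ν' s * ρ s a * K' s a s'
              = (ν s - ν' s) * ρ s a * K s a s'
                + ν' s * ρ s a * (K s a s' - K' s a s') := by ring
          rw [h1]
          calc |(ν s - ν' s) * ρ s a * K s a s' + ν' s * ρ s a * (K s a s' - K' s a s')|
              ≤ |(ν s - ν' s) * ρ s a * K s a s'|
                + |ν' s * ρ s a * (K s a s' - K' s a s')| := abs_add_le _ _
            _ = |ν s - ν' s| * ρ s a * K s a s'
                + ν' s * ρ s a * |K s a s' - K' s a s'| := by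
                rw [abs_mul, abs_mul, abs_mul, abs_mul, abs_of_nonneg (hρ s a),
                  abs_of_nonneg ((hK s a).1 s'), abs_of_nonneg (hν' s)]
  calc l1 (fun s' => ∑ s, ∑ a, ν s * ρ s a * K s a s')
         (fun s' => ∑ s, ∑ a, ν' s * ρ s a * K' s a s')
      ≤ ∑ s', ∑ s, ∑ a, (|ν s - ν' s| * ρ s a * K s a s'
          + ν' s * ρ s a * |K s a s' - K' s a s'|) :=
        sum_le_sum fun s' _ => key s'
    _ = ∑ s, ∑ a, (|ν s - ν' s| * ρ s a * (∑ s', K s a s')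
          + ν' s * ρ s a * (∑ s', |K s a s' - K' s a s'|)) := by
        rw [sum_comm]
        refine sum_congr rfl fun s _ => ?_
        rw [sum_comm]
        refine sum_congr rfl fun a _ => ?_
        rw [sum_add_distrib, ← mul_sum, ← mul_sum]
    _ = ∑ s, ∑ a, (|ν s - ν' s| * ρ s a + ν' s * ρ s a * l1 (K s a) (K' s a)) := by
        refine sum_congr rfl fun s _ => sum_congr rfl fun a _ => ?_
        rw [(hK s a).2, mul_one]
        rfl
    _ = (∑ s, ∑ a, |ν s - ν' s| * ρ s a)
          + ∑ s, ∑ a, ν' s * ρ s a * l1 (K s a) (K' s a) := by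
        rw [← sum_add_distrib]
        exact sum_congr rfl fun s _ => sum_add_distrib
    _ = l1 ν ν' + ∑ s, ∑ a, ν' s * ρ s a * l1 (K s a) (K' s a) := by
        congr 1
        calc ∑ s, ∑ a, |ν s - ν' s| * ρ s a
            = ∑ s, |ν s - ν' s| * ∑ a, ρ s a :=
              sum_congr rfl fun s _ => (mul_sum _ _ _).symm
          _ = ∑ s, |ν s - ν' s| := by simp [hρ1]
          _ = l1 ν ν' := rfl

lemma com_step (ν ν' : S → ℝ) (hν : ∑ s, ν s = 1) (hν' : ∑ s, ν' s = 1)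
    (c : S → ℝ) (hc0 : ∀ s, 0 ≤ c s) (hc2 : ∀ s, c s ≤ 2) :
    ∑ s, ν s * c s ≤ ∑ s, ν' s * c s + l1 ν ν' := by
  have key : ∑ s, (ν s - ν' s) * (c s - 1) = ∑ s, ν s * c s - ∑ s, ν' s * c s := by
    have h1 : ∑ s, (ν s - ν' s) * (c s - 1)
        = (∑ s, (ν s * c s - ν' s * c s)) - ∑ s, (ν s - ν' s) := by
      rw [← sum_sub_distrib]
      exact sum_congr rfl fun s _ => by ring
    rw [h1, sum_sub_distrib, sum_sub_distrib, hν, hν']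
    ring
  have bound : ∑ s, (ν s - ν' s) * (c s - 1) ≤ l1 ν ν' := by
    apply sum_le_sum
    intro s _
    calc (ν s - ν' s) * (c s - 1) ≤ |(ν s - ν' s) * (c s - 1)| := le_abs_self _
      _ = |ν s - ν' s| * |c s - 1| := abs_mul _ _
      _ ≤ |ν s - ν' s| * 1 := by
          apply mul_le_mul_of_nonneg_left _ (abs_nonneg _)
          rw [abs_le]; constructor <;> linarith [hc0 s, hc2 s]
      _ = |ν s - ν' s| := mul_one _
  linarith [key ▸ bound]

end Aux

lemma l1_densF_le {S A : Type*} [Fintype S] [Fintype A] (H : ℕ)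
    (P Pt : ℕ → S → A → (S → ℝ) → S → ℝ) (μ₁ : S → ℝ) (hμ₁ : μ₁ ∈ stdSimplex ℝ S)
    (hP : IsKernel H P) (hPt : IsKernel H Pt) (π πt : ℕ → S → A → ℝ)
    (hπ : IsPolicy π) (hπt : IsPolicy πt) :
    ∀ h, h ≤ H → l1 (densF Pt μ₁ π πt h) (densF P μ₁ π πt h) ≤
      ∑ k ∈ Finset.range h, ∑ s, ∑ a, densF P μ₁ π πt k s * πt k s a *
        l1 (Pt k s a (dens Pt μ₁ π k)) (P k s a (dens P μ₁ π k)) := by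
  intro h
  induction h with
  | zero => intro _; simp [densF, l1_self]
  | succ h ih =>
    intro hle
    have hh : h < H := Nat.lt_of_lt_of_le (Nat.lt_succ_self h) hle
    have hstep := step_l1 (densF Pt μ₁ π πt h) (densF P μ₁ π πt h)
      (fun s => (densF_mem H P μ₁ hμ₁ hP π πt hπ hπt h hh.le).1 s)
      (πt h) (fun s a => (hπt h s).1 a) (fun s => (hπt h s).2)
      (fun s a => Pt h s a (dens Pt μ₁ π h)) (fun s a => P h s a (dens P μ₁ π h))
      (fun s a => hPt h hh s a _ (dens_mem H Pt μ₁ hμ₁ hPt π hπ h hh.le))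
    rw [Finset.sum_range_succ]
    exact le_trans hstep (add_le_add (ih hh.le) le_rfl)

/-- **Change of measure.** For any three mean-field MDPs `M, M̃, M̄` and
policies `π, π̃`:
`E_{π̃,M̃(π)}[Σ ‖P_{M̃} − P_{M̄}‖₁] ≤ E_{π̃,M(π)}[Σ ‖P_M − P_{M̄}‖₁] + (H+1)·E_{π̃,M(π)}[Σ ‖P_M − P_{M̃}‖₁]`,
with all kernels evaluated at the densities induced by `π` in the respective models. -/
theorem change_of_measure {S A : Type*} [Fintype S] [Fintype A] (H : ℕ)
    (P Pt Pb : ℕ → S → A → (S → ℝ) → S → ℝ) (μ₁ : S → ℝ) (hμ₁ : μ₁ ∈ stdSimplex ℝ S)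
    (hP : IsKernel H P) (hPt : IsKernel H Pt) (hPb : IsKernel H Pb)
    (π πt : ℕ → S → A → ℝ) (hπ : IsPolicy π) (hπt : IsPolicy πt) :
    expF H Pt μ₁ π πt (fun h s a =>
        l1 (Pt h s a (dens Pt μ₁ π h)) (Pb h s a (dens Pb μ₁ π h))) ≤
      expF H P μ₁ π πt (fun h s a =>
        l1 (P h s a (dens P μ₁ π h)) (Pb h s a (dens Pb μ₁ π h)))
      + (H + 1) * expF H P μ₁ π πt (fun h s a =>
        l1 (P h s a (dens P μ₁ π h)) (Pt h s a (dens Pt μ₁ π h))) := by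
  have hνt := densF_mem H Pt μ₁ hμ₁ hPt π πt hπ hπt
  have hν := densF_mem H P μ₁ hμ₁ hP π πt hπ hπt
  -- Step 1: change of measure from M̃-law to M-law, paying the l1 drift of the laws
  have step1 : expF H Pt μ₁ π πt (fun h s a =>
        l1 (Pt h s a (dens Pt μ₁ π h)) (Pb h s a (dens Pb μ₁ π h)))
      ≤ expF H P μ₁ π πt (fun h s a =>
        l1 (Pt h s a (dens Pt μ₁ π h)) (Pb h s a (dens Pb μ₁ π h)))
        + ∑ h ∈ Finset.range H, l1 (densF Pt μ₁ π πt h) (densF P μ₁ π πt h) := by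
    unfold expF
    rw [← Finset.sum_add_distrib]
    apply Finset.sum_le_sum
    intro h hmem
    have hh : h < H := Finset.mem_range.mp hmem
    have hc0 : ∀ s, 0 ≤ ∑ a, πt h s a *
        l1 (Pt h s a (dens Pt μ₁ π h)) (Pb h s a (dens Pb μ₁ π h)) :=
      fun s => Finset.sum_nonneg fun a _ => mul_nonneg ((hπt h s).1 a) (l1_nonneg _ _)
    have hc2 : ∀ s, (∑ a, πt h s a *
        l1 (Pt h s a (dens Pt μ₁ π h)) (Pb h s a (dens Pb μ₁ π h))) ≤ 2 := by
      intro s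
      calc ∑ a, πt h s a * l1 (Pt h s a (dens Pt μ₁ π h)) (Pb h s a (dens Pb μ₁ π h))
          ≤ ∑ a, πt h s a * 2 := Finset.sum_le_sum fun a _ =>
            mul_le_mul_of_nonneg_left
              (l1_le_two (hPt h hh s a _ (dens_mem H Pt μ₁ hμ₁ hPt π hπ h hh.le))
                (hPb h hh s a _ (dens_mem H Pb μ₁ hμ₁ hPb π hπ h hh.le)))
              ((hπt h s).1 a)
        _ = 2 := by rw [← Finset.sum_mul, (hπt h s).2, one_mul]
    have hcom := com_step (densF Pt μ₁ π πt h) (densF P μ₁ π πt h)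
      (hνt h hh.le).2 (hν h hh.le).2
      (fun s => ∑ a, πt h s a *
        l1 (Pt h s a (dens Pt μ₁ π h)) (Pb h s a (dens Pb μ₁ π h))) hc0 hc2
    simpa [Finset.mul_sum, mul_assoc] using hcom
  -- Step 2: pointwise triangle inequality under the M-law
  have step2 : expF H P μ₁ π πt (fun h s a =>
        l1 (Pt h s a (dens Pt μ₁ π h)) (Pb h s a (dens Pb μ₁ π h)))
      ≤ expF H P μ₁ π πt (fun h s a =>
        l1 (P h s a (dens P μ₁ π h)) (Pb h s a (dens Pb μ₁ π h)))
        + expF H P μ₁ π πt (fun h s a =>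
        l1 (P h s a (dens P μ₁ π h)) (Pt h s a (dens Pt μ₁ π h))) := by
    unfold expF
    rw [← Finset.sum_add_distrib]
    apply Finset.sum_le_sum
    intro h hmem
    have hh : h < H := Finset.mem_range.mp hmem
    rw [← Finset.sum_add_distrib]
    apply Finset.sum_le_sum
    intro s _
    rw [← Finset.sum_add_distrib]
    apply Finset.sum_le_sum
    intro a _
    have tri : l1 (Pt h s a (dens Pt μ₁ π h)) (Pb h s a (dens Pb μ₁ π h))
        ≤ l1 (P h s a (dens P μ₁ π h)) (Pb h s a (dens Pb μ₁ π h))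
          + l1 (P h s a (dens P μ₁ π h)) (Pt h s a (dens Pt μ₁ π h)) := by
      have t := l1_triangle (Pt h s a (dens Pt μ₁ π h)) (P h s a (dens P μ₁ π h))
        (Pb h s a (dens Pb μ₁ π h))
      have sy := l1_symm (Pt h s a (dens Pt μ₁ π h)) (P h s a (dens P μ₁ π h))
      linarith
    have nn : 0 ≤ densF P μ₁ π πt h s * πt h s a :=
      mul_nonneg ((hν h hh.le).1 s) ((hπt h s).1 a)
    calc densF P μ₁ π πt h s * πt h s a *
          l1 (Pt h s a (dens Pt μ₁ π h)) (Pb h s a (dens Pb μ₁ π h))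
        ≤ densF P μ₁ π πt h s * πt h s a *
          (l1 (P h s a (dens P μ₁ π h)) (Pb h s a (dens Pb μ₁ π h))
            + l1 (P h s a (dens P μ₁ π h)) (Pt h s a (dens Pt μ₁ π h))) :=
          mul_le_mul_of_nonneg_left tri nn
      _ = densF P μ₁ π πt h s * πt h s a *
            l1 (P h s a (dens P μ₁ π h)) (Pb h s a (dens Pb μ₁ π h))
          + densF P μ₁ π πt h s * πt h s a *
            l1 (P h s a (dens P μ₁ π h)) (Pt h s a (dens Pt μ₁ π h)) := by ring
  -- Step 3: bound the accumulated l1 drift by H times the model distance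
  have step3 : ∑ h ∈ Finset.range H, l1 (densF Pt μ₁ π πt h) (densF P μ₁ π πt h)
      ≤ (H : ℝ) * expF H P μ₁ π πt (fun h s a =>
        l1 (P h s a (dens P μ₁ π h)) (Pt h s a (dens Pt μ₁ π h))) := by
    have hG : ∀ k ∈ Finset.range H, 0 ≤ ∑ s, ∑ a, densF P μ₁ π πt k s * πt k s a *
        l1 (Pt k s a (dens Pt μ₁ π k)) (P k s a (dens P μ₁ π k)) := by
      intro k hk
      have hkH : k < H := Finset.mem_range.mp hk
      refine Finset.sum_nonneg fun s _ => Finset.sum_nonneg fun a _ => ?_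
      exact mul_nonneg (mul_nonneg ((hν k hkH.le).1 s) ((hπt k s).1 a)) (l1_nonneg _ _)
    have hE : ∀ h ∈ Finset.range H, l1 (densF Pt μ₁ π πt h) (densF P μ₁ π πt h)
        ≤ expF H P μ₁ π πt (fun h s a =>
          l1 (P h s a (dens P μ₁ π h)) (Pt h s a (dens Pt μ₁ π h))) := by
      intro h hmem
      have hh : h < H := Finset.mem_range.mp hmem
      calc l1 (densF Pt μ₁ π πt h) (densF P μ₁ π πt h)
          ≤ ∑ k ∈ Finset.range h, ∑ s, ∑ a, densF P μ₁ π πt k s * πt k s a *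
              l1 (Pt k s a (dens Pt μ₁ π k)) (P k s a (dens P μ₁ π k)) :=
            l1_densF_le H P Pt μ₁ hμ₁ hP hPt π πt hπ hπt h hh.le
        _ ≤ ∑ k ∈ Finset.range H, ∑ s, ∑ a, densF P μ₁ π πt k s * πt k s a *
              l1 (Pt k s a (dens Pt μ₁ π k)) (P k s a (dens P μ₁ π k)) :=
            Finset.sum_le_sum_of_subset_of_nonneg
              (Finset.range_subset_range.mpr hh.le) (fun k hk _ => hG k hk)
        _ = expF H P μ₁ π πt (fun h s a =>
              l1 (P h s a (dens P μ₁ π h)) (Pt h s a (dens Pt μ₁ π h))) := by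
            unfold expF
            refine Finset.sum_congr rfl fun k _ => Finset.sum_congr rfl fun s _ =>
              Finset.sum_congr rfl fun a _ => ?_
            rw [l1_symm]
    calc ∑ h ∈ Finset.range H, l1 (densF Pt μ₁ π πt h) (densF P μ₁ π πt h)
        ≤ ∑ _h ∈ Finset.range H, expF H P μ₁ π πt (fun h s a =>
            l1 (P h s a (dens P μ₁ π h)) (Pt h s a (dens Pt μ₁ π h))) :=
          Finset.sum_le_sum hE
      _ = (H : ℝ) * expF H P μ₁ π πt (fun h s a =>
            l1 (P h s a (dens P μ₁ π h)) (Pt h s a (dens Pt μ₁ π h))) := by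
          rw [Finset.sum_const, Finset.card_range, nsmul_eq_mul]
  calc expF H Pt μ₁ π πt (fun h s a =>
        l1 (Pt h s a (dens Pt μ₁ π h)) (Pb h s a (dens Pb μ₁ π h)))
      ≤ expF H P μ₁ π πt (fun h s a =>
        l1 (Pt h s a (dens Pt μ₁ π h)) (Pb h s a (dens Pb μ₁ π h)))
        + ∑ h ∈ Finset.range H, l1 (densF Pt μ₁ π πt h) (densF P μ₁ π πt h) := step1
    _ ≤ (expF H P μ₁ π πt (fun h s a =>
          l1 (P h s a (dens P μ₁ π h)) (Pb h s a (dens Pb μ₁ π h)))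
        + expF H P μ₁ π πt (fun h s a =>
          l1 (P h s a (dens P μ₁ π h)) (Pt h s a (dens Pt μ₁ π h))))
        + (H : ℝ) * expF H P μ₁ π πt (fun h s a =>
          l1 (P h s a (dens P μ₁ π h)) (Pt h s a (dens Pt μ₁ π h))) :=
        add_le_add step2 step3
    _ = expF H P μ₁ π πt (fun h s a =>
          l1 (P h s a (dens P μ₁ π h)) (Pb h s a (dens Pb μ₁ π h)))
        + (H + 1) * expF H P μ₁ π πt (fun h s a =>
          l1 (P h s a (dens P μ₁ π h)) (Pt h s a (dens Pt μ₁ π h))) := by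
        push_cast; ring
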